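/- Let b ≥ 3 and r ≥ 1 be natural numbers, let m₀ and n be natural numbers, and let k : ℕ → ℕ be a sequence that is nondecreasing on the indices 0, 1, …, r−1. Assume k 0 ≥ 2, m₀ ≥ 3, n = m₀ + Σ_{j=0}^{r−1} k j, and (as rational numbers) r ≥ n/b + b/2 − 2. If l < r is an index with k l ≥ b, then l ≥ ⌊b/2⌋. -/

import Mathlib

/-- Arithmetic content of the bound on codimensions in a chain of fixed-point set components:
if `k 0 ≥ 2`, `m₀ ≥ 3`, `n = m₀ + ∑_{j<r} k j`, the `k j` are nondecreasing for `j < r`, and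
`r ≥ n/b + b/2 − 2` (as rationals), then any index `l < r` with `k l ≥ b` satisfies
`l ≥ ⌊b/2⌋`. -/
theorem index_lower_bound_of_large_codim (b r m₀ n : ℕ) (k : ℕ → ℕ)
    (hb : 3 ≤ b) (hr : 1 ≤ r)
    (hmono : ∀ i j : ℕ, i ≤ j → j < r → k i ≤ k j)
    (hk0 : 2 ≤ k 0) (hm₀ : 3 ≤ m₀)
    (hn : n = m₀ + ∑ j ∈ Finset.range r, k j)
    (hrge : (r : ℚ) ≥ (n : ℚ) / (b : ℚ) + (b : ℚ) / 2 - 2)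
    (l : ℕ) (hl : l < r) (hkl : b ≤ k l) :
    b / 2 ≤ l := by
  have hsplit : ∑ j ∈ Finset.range r, k j
      = ∑ j ∈ Finset.range l, k j + ∑ j ∈ Finset.Ico l r, k j := by
    rw [Finset.range_eq_Ico, Finset.range_eq_Ico]
    exact (Finset.sum_Ico_consecutive k (Nat.zero_le l) hl.le).symm
  have h1 : 2 * l ≤ ∑ j ∈ Finset.range l, k j := by
    calc 2 * l = ∑ _j ∈ Finset.range l, 2 := by simp [mul_comm]
    _ ≤ _ := Finset.sum_le_sum fun j hj =>
        le_trans hk0 (hmono 0 j (Nat.zero_le _) (lt_trans (Finset.mem_range.1 hj) hl))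
  have h2 : b * (r - l) ≤ ∑ j ∈ Finset.Ico l r, k j := by
    calc b * (r - l) = ∑ _j ∈ Finset.Ico l r, b := by simp [Nat.card_Ico, mul_comm]
    _ ≤ _ := Finset.sum_le_sum fun j hj =>
        le_trans hkl (hmono l j (Finset.mem_Ico.1 hj).1 (Finset.mem_Ico.1 hj).2)
  have hnge : 3 + 2 * l + b * (r - l) ≤ n := by omega
  have hb0 : (0:ℚ) < (b:ℚ) := by positivity
  rw [ge_iff_le, sub_le_iff_le_add, div_add' _ _ _ hb0.ne', div_le_iff₀ hb0] at hrge
  -- get: 2*b*r + 4*b ≥ 2*n + b*b  over ℚ, then over ℕ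
  have key : 2 * n + b * b ≤ 2 * b * r + 4 * b := by
    have : (2 * n + b * b : ℚ) ≤ 2 * b * r + 4 * b := by nlinarith [hrge]
    exact_mod_cast this
  -- substitute n bound; let s = r - l
  have hs : r = l + (r - l) := by omega
  have key2 : 2 * (3 + 2 * l + b * (r - l)) + b * b ≤ 2 * b * (l + (r - l)) + 4 * b := by
    calc 2 * (3 + 2 * l + b * (r - l)) + b * b ≤ 2 * n + b * b := by omega
    _ ≤ 2 * b * r + 4 * b := key
    _ = 2 * b * (l + (r - l)) + 4 * b := by rw [← hs]
  -- so 2*b*l ≥ 6 + 4*l + b*b - 4*b, hence 2*l*(b-2) ≥ (b-2)^2 + 2, hence 2*l ≥ b - 1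
  have h2l : b - 1 ≤ 2 * l := by
    by_contra hcon
    push_neg at hcon
    have hle : 2 * l ≤ b - 2 := by omega
    have : 2 * b * l + 6 + 4 * l + b * b ≤ 2 * b * l + 2 * b * l + 4 * b := by
      nlinarith [key2]
    nlinarith [hle, Nat.sub_add_cancel (by omega : 2 ≤ b), this]
  omega
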